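/- Any two trees that are both α-regular (every vertex has exactly α neighbors) for the same infinite cardinal α are isomorphic as graphs. -/

import Mathlib

open Cardinal

universe u

private def canonGraph (α : Cardinal.{u}) : SimpleGraph (List α.out) where
  Adj l m := (∃ a, m = a :: l) ∨ (∃ a, l = a :: m)
  symm := by constructor; intro l m h; tauto
  loopless := by
    constructor
    intro l h
    rcases h with ⟨a, h⟩ | ⟨a, h⟩ <;> simpa using congrArg List.length h

open SimpleGraph Walk in
private lemma tree_iso_canon {V : Type u} (α : Cardinal.{u}) (hα : ℵ₀ ≤ α)
    (T : SimpleGraph V) (hc : T.Connected) (ha : T.IsAcyclic)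
    (hreg : ∀ v : V, #(T.neighborSet v) = α) :
    Nonempty (canonGraph α ≃g T) := by
  classical
  obtain ⟨r⟩ := hc.nonempty
  -- every path has length equal to the distance between its endpoints
  have hlen : ∀ {x y : V} (p : T.Walk x y), p.IsPath → p.length = T.dist x y := by
    intro x y p hp
    obtain ⟨q, hq, hql⟩ := hc.exists_path_of_dist x y
    have hpq : (⟨p, hp⟩ : T.Path x y) = ⟨q, hq⟩ := ha.path_unique _ _
    rw [← hql]
    exact congrArg Walk.length (congrArg Subtype.val hpq)
  -- adjacent vertices have distances from r differing by exactly one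
  have hstep : ∀ {u v : V}, T.Adj u v →
      T.dist r v = T.dist r u + 1 ∨ T.dist r u = T.dist r v + 1 := by
    intro u v hadj
    have h1 : T.dist r v ≤ T.dist r u + 1 := by
      have hle : T.dist u v ≤ 1 := by simpa using T.dist_le (hadj.toWalk)
      have htri := hc.dist_triangle (u := r) (v := u) (w := v)
      omega
    have h2 : T.dist r u ≤ T.dist r v + 1 := by
      have hle : T.dist v u ≤ 1 := by simpa using T.dist_le (hadj.symm.toWalk)
      have htri := hc.dist_triangle (u := r) (v := v) (w := u)
      omega
    have hne : T.dist r u ≠ T.dist r v := by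
      intro heq
      obtain ⟨p, hp, hpl⟩ := hc.exists_path_of_dist r u
      obtain ⟨q, hq, hql⟩ := hc.exists_path_of_dist r v
      by_cases hu : u ∈ q.support
      · have hdrop : (q.dropUntil u hu).IsPath := hq.dropUntil hu
        have htake : (q.takeUntil u hu).IsPath := hq.takeUntil hu
        have hdl : (q.dropUntil u hu).length = T.dist u v := hlen _ hdrop
        have htl : (q.takeUntil u hu).length = T.dist r u := hlen _ htake
        have hsum := congrArg Walk.length (q.take_spec hu)
        rw [Walk.length_append] at hsum
        have huv : T.dist u v = 1 := by
          have h3 : T.dist u v ≤ 1 := by simpa using T.dist_le hadj.toWalk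
          have h4 : T.dist u v ≠ 0 := fun h0 => hadj.ne (hc.dist_eq_zero_iff.mp h0)
          omega
        omega
      · have hcp : (q.concat hadj.symm).IsPath := by
          rw [← isPath_reverse_iff, reverse_concat]
          exact (cons_isPath_iff _ _).mpr ⟨hq.reverse, by simpa using hu⟩
        have := hlen _ hcp
        rw [Walk.length_concat] at this
        omega
    omega
  -- uniqueness of the "parent": two neighbors of v closer to r are equal
  have huniq : ∀ {v u₁ u₂ : V}, T.Adj v u₁ → T.Adj v u₂ →
      T.dist r u₁ + 1 = T.dist r v → T.dist r u₂ + 1 = T.dist r v → u₁ = u₂ := by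
    intro v u₁ u₂ h₁ h₂ hd₁ hd₂
    obtain ⟨p₁, hp₁, hl₁⟩ := hc.exists_path_of_dist r u₁
    obtain ⟨p₂, hp₂, hl₂⟩ := hc.exists_path_of_dist r u₂
    have hv₁ : v ∉ p₁.support := by
      intro hmem
      have := T.dist_le (p₁.takeUntil v hmem)
      have := p₁.length_takeUntil_le hmem
      omega
    have hv₂ : v ∉ p₂.support := by
      intro hmem
      have := T.dist_le (p₂.takeUntil v hmem)
      have := p₂.length_takeUntil_le hmem
      omega
    have hcp₁ : (p₁.concat h₁.symm).IsPath := by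
      rw [← isPath_reverse_iff, reverse_concat]
      exact (cons_isPath_iff _ _).mpr ⟨hp₁.reverse, by simpa using hv₁⟩
    have hcp₂ : (p₂.concat h₂.symm).IsPath := by
      rw [← isPath_reverse_iff, reverse_concat]
      exact (cons_isPath_iff _ _).mpr ⟨hp₂.reverse, by simpa using hv₂⟩
    have heq : (⟨p₁.concat h₁.symm, hcp₁⟩ : T.Path r v) = ⟨p₂.concat h₂.symm, hcp₂⟩ :=
      ha.path_unique _ _
    have heq' : p₁.concat h₁.symm = p₂.concat h₂.symm := congrArg Subtype.val heq
    obtain ⟨hv, -⟩ := Walk.concat_inj heq'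
    exact hv
  -- the set of children of a vertex
  set child : V → Set V := fun v => {w | T.Adj v w ∧ T.dist r w = T.dist r v + 1} with hchild_def
  have hchild_card : ∀ v, #(child v) = α := by
    intro v
    have hsub : child v ⊆ T.neighborSet v := fun w hw => hw.1
    have hle : #(child v) ≤ α := by
      rw [← hreg v]; exact Cardinal.mk_le_mk_of_subset hsub
    set S : Set V := {w | T.Adj v w ∧ T.dist r w + 1 = T.dist r v} with hS_def
    have hSsub : S.Subsingleton := by
      intro x hx y hy
      exact huniq hx.1 hy.1 hx.2 hy.2
    have hcover : T.neighborSet v ⊆ child v ∪ S := by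
      intro w hw
      rcases hstep hw with h | h
      · exact Or.inl ⟨hw, h⟩
      · exact Or.inr ⟨hw, h.symm⟩
    have hge : α ≤ #(child v) + 1 := by
      calc α = #(T.neighborSet v) := (hreg v).symm
        _ ≤ #(child v ∪ S : Set V) := Cardinal.mk_le_mk_of_subset hcover
        _ ≤ #(child v) + #S := Cardinal.mk_union_le _ _
        _ ≤ #(child v) + 1 := by
            gcongr
            exact Cardinal.mk_le_one_iff_set_subsingleton.mpr hSsub
    have hinf : ℵ₀ ≤ #(child v) := by
      by_contra hlt
      push_neg at hlt
      have : #(child v) + 1 < ℵ₀ := Cardinal.add_lt_aleph0 hlt Cardinal.one_lt_aleph0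
      exact absurd (hα.trans hge) (not_le.mpr this)
    rw [Cardinal.add_one_eq hinf] at hge
    exact le_antisymm hle hge
  -- choose bijections from α.out to children
  have hbij : ∀ v : V, Nonempty (α.out ≃ ↑(child v)) := by
    intro v
    rw [← Cardinal.eq, Cardinal.mk_out, hchild_card v]
  set c : ∀ v : V, α.out ≃ ↑(child v) := fun v => (hbij v).some with hc_def
  -- the map from lists to vertices
  set g : List α.out → V := fun l => l.foldr (fun a v => ((c v) a : V)) r with hg_def
  have hg_nil : g [] = r := rfl
  have hg_cons : ∀ (a : α.out) (l : List α.out), g (a :: l) = ((c (g l)) a : V) := by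
    intro a l; rfl
  have hg_mem : ∀ (a : α.out) (l : List α.out), g (a :: l) ∈ child (g l) := by
    intro a l
    rw [hg_cons]
    exact ((c (g l)) a).2
  have hdist : ∀ l : List α.out, T.dist r (g l) = l.length := by
    intro l
    induction l with
    | nil => simp [hg_nil, T.dist_self]
    | cons a l ih =>
      have := (hg_mem a l).2
      simp only [List.length_cons]
      omega
  -- injectivity
  have hinj : Function.Injective g := by
    intro l m hlm
    induction l generalizing m with
    | nil =>
      cases m with
      | nil => rfl
      | cons b m =>
        exfalso
        have h1 := hdist ([] : List α.out)
        rw [hlm, hdist (b :: m)] at h1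
        simp at h1
    | cons a l ih =>
      cases m with
      | nil =>
        exfalso
        have h1 := hdist (a :: l)
        rw [hlm, hdist ([] : List α.out)] at h1
        simp at h1
      | cons b m =>
        have hm1 := hg_mem a l
        have hm2 := hg_mem b m
        have e1 : T.dist r (g (a :: l)) = l.length + 1 := by
          simpa using hdist (a :: l)
        have e2 : T.dist r (g (b :: m)) = m.length + 1 := by
          simpa using hdist (b :: m)
        have hlenlm : l.length = m.length := by
          rw [hlm, e2] at e1; omega
        have hglm : g l = g m := by
          refine huniq (v := g (a :: l)) hm1.1.symm ?_ ?_ ?_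
          · rw [hlm]; exact hm2.1.symm
          · rw [hdist l, e1]
          · rw [hdist m, e1]; omega
        have hlm' : l = m := ih hglm
        subst hlm'
        have : ((c (g l)) a : V) = ((c (g l)) b : V) := by
          rw [← hg_cons, ← hg_cons, hlm]
        have := Subtype.ext this
        rw [(c (g l)).injective this]
  -- surjectivity
  have hsurj_aux : ∀ (n : ℕ) (v : V), T.dist r v = n → ∃ l, g l = v := by
    intro n
    induction n with
    | zero =>
      intro v hv
      exact ⟨[], hc.dist_eq_zero_iff.mp hv⟩
    | succ n ih =>
      intro v hv
      -- find a neighbor closer to r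
      have hvr : v ≠ r := by
        intro h; subst h; rw [T.dist_self] at hv; omega
      obtain ⟨p, hp, hpl⟩ := hc.exists_path_of_dist r v
      have hvr' : v ≠ r := hvr
      obtain ⟨w, hadj, q, hq⟩ := Walk.exists_eq_cons_of_ne hvr' p.reverse
      have hqlen : q.length = n := by
        have := congrArg Walk.length hq
        rw [Walk.length_reverse] at this
        simp [Walk.length_cons] at this
        omega
      have hwn : T.dist r w = n := by
        have hle : T.dist r w ≤ n := by
          have := T.dist_le q.reverse
          rwa [Walk.length_reverse, hqlen] at this
        have hge : T.dist r v ≤ T.dist r w + 1 := by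
          have hwv : T.dist w v ≤ 1 := by simpa using T.dist_le hadj.symm.toWalk
          have htri := hc.dist_triangle (u := r) (v := w) (w := v)
          omega
        omega
      obtain ⟨l, hl⟩ := ih w hwn
      have hmem : v ∈ child w := ⟨hadj.symm, by omega⟩
      obtain ⟨a, hca⟩ := (c w).surjective ⟨v, hmem⟩
      refine ⟨a :: l, ?_⟩
      rw [hg_cons, hl, hca]
  have hsurj : Function.Surjective g := by
    intro v
    exact hsurj_aux (T.dist r v) v rfl
  -- adjacency
  have hiff : ∀ l m : List α.out,
      T.Adj (g l) (g m) ↔ (canonGraph α).Adj l m := by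
    intro l m
    constructor
    · intro hadj
      rcases hstep hadj with h | h
      · left
        have hmem : g m ∈ child (g l) := ⟨hadj, h⟩
        obtain ⟨a, hca⟩ := (c (g l)).surjective ⟨g m, hmem⟩
        have : g (a :: l) = g m := by rw [hg_cons, hca]
        exact ⟨a, (hinj this).symm⟩
      · right
        have hmem : g l ∈ child (g m) := ⟨hadj.symm, h⟩
        obtain ⟨a, hca⟩ := (c (g m)).surjective ⟨g l, hmem⟩
        have : g (a :: m) = g l := by rw [hg_cons, hca]
        exact ⟨a, (hinj this).symm⟩
    · rintro (⟨a, rfl⟩ | ⟨a, rfl⟩)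
      · exact (hg_mem a l).1
      · exact ((hg_mem a m).1).symm
  exact ⟨{ toEquiv := Equiv.ofBijective g ⟨hinj, hsurj⟩,
           map_rel_iff' := fun {l m} => by
             show T.Adj (g l) (g m) ↔ (canonGraph α).Adj l m
             exact hiff l m }⟩

/-- Any two α-regular trees, for the same infinite cardinal α, are isomorphic. -/
theorem stmt_0 {V W : Type u} (α : Cardinal.{u}) (hα : ℵ₀ ≤ α)
    (T₁ : SimpleGraph V) (T₂ : SimpleGraph W)
    (hT₁c : T₁.Connected) (hT₁a : T₁.IsAcyclic)
    (hT₂c : T₂.Connected) (hT₂a : T₂.IsAcyclic)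
    (hreg₁ : ∀ v : V, #(T₁.neighborSet v) = α)
    (hreg₂ : ∀ w : W, #(T₂.neighborSet w) = α) :
    Nonempty (T₁ ≃g T₂) := by
  obtain ⟨e₁⟩ := tree_iso_canon α hα T₁ hT₁c hT₁a hreg₁
  obtain ⟨e₂⟩ := tree_iso_canon α hα T₂ hT₂c hT₂a hreg₂
  exact ⟨e₁.symm.trans e₂⟩
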